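/- For every λ ∈ P_I^− one has v(λ) ∈ W^I and λ̃ = λ − v(λ)^{-1}ρ(k) satisfies (λ̃, α) ≤ 0 for all α ∈ R_I^+; moreover the map P_I^− → 𝔞*, λ ↦ λ̃, is injective. -/

import Mathlib

/-!
Common setting: a finite crystallographic root system `R` with Weyl group `W` in a
Euclidean space `V` (we identify `𝔞*` with `𝔞 = V` via the inner product), a fixed set
of positive roots `Rpos`, simple roots `Pi`, fundamental weights `fw`, the weight
lattice `P`, dominant weights `Pplus`, and for a subset `I ⊆ Pi` of the simple roots the
parabolic subgroup `W_I`, its positive roots `R_I^+`, `P_I^+`, the set `W^I` of minimal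
coset representatives, lengths, the Bruhat order, the orderings `⪯`, `≤_∅`, `≤_I`, the
group algebra `ℂ[P]`, the orbit sums `m_I(λ)`, the compact torus `A` (encoded abstractly
through its normalized Haar measure and its orthonormal multiplicative characters
`e^λ = ev λ`, `λ ∈ P`), the weight function `δ_k` and the inner product `(·,·)_k`.
-/

open scoped RealInnerProductSpace BigOperators Classical
open MeasureTheory

noncomputable section

variable {V : Type*} [NormedAddCommGroup V] [InnerProductSpace ℝ V] [FiniteDimensional ℝ V]

/-- A finite crystallographic root system in `V`, with a choice of positive roots,
the corresponding simple roots, and the fundamental weights. -/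
structure RootData (V : Type*) [NormedAddCommGroup V] [InnerProductSpace ℝ V] where
  R : Finset V
  Rpos : Finset V
  Pi : Finset V
  fw : V → V
  nonzero : ∀ α ∈ R, α ≠ 0
  reflect_mem : ∀ α ∈ R, ∀ β ∈ R, β - (2 * ⟪β, α⟫ / ⟪α, α⟫) • α ∈ R
  crystallographic : ∀ α ∈ R, ∀ β ∈ R, ∃ n : ℤ, 2 * ⟪β, α⟫ / ⟪α, α⟫ = (n : ℝ)
  pos_subset : Rpos ⊆ R
  pos_or_neg : ∀ α ∈ R, (α ∈ Rpos ↔ ¬ -α ∈ Rpos)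
  simple_subset : Pi ⊆ Rpos
  pos_comb : ∀ α ∈ Rpos, ∃ c : V → ℝ, (∀ β, 0 ≤ c β) ∧ α = ∑ β ∈ Pi, c β • β
  span_R : Submodule.span ℝ (R : Set V) = ⊤
  fw_prop : ∀ α ∈ Pi, ∀ β ∈ Pi, ⟪fw α, (2 / ⟪β, β⟫) • β⟫ = (if α = β then 1 else 0)

/-- The orthogonal reflection `s_α` in the hyperplane orthogonal to `α`. -/
def rRefl (α : V) : V ≃ₗᵢ[ℝ] V := Submodule.reflection (ℝ ∙ α)ᗮ

/-- The reflection group generated by the reflections in the elements of `S`. -/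
def weylGen (S : Finset V) : Subgroup (V ≃ₗᵢ[ℝ] V) :=
  Subgroup.closure { w | ∃ α ∈ S, w = rRefl α }

namespace RootData

variable (D : RootData V)

/-- The Weyl group `W`, generated by the simple reflections. -/
def Weyl : Subgroup (V ≃ₗᵢ[ℝ] V) := Subgroup.closure { w | ∃ α ∈ D.Pi, w = rRefl α }

/-- The parabolic subgroup `W_I` generated by the simple reflections from `I ⊆ Π`. -/
abbrev WeylP (_D : RootData V) (I : Finset V) : Subgroup (V ≃ₗᵢ[ℝ] V) := weylGen I

/-- `R_I^+ = R_I ∩ R^+`, the positive roots of the parabolic subsystem. -/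
def RposI (I : Finset V) : Set V :=
  { α : V | α ∈ D.Rpos ∧ α ∈ Submodule.span ℝ (I : Set V) }

/-- `W^I = {v ∈ W ∣ v(R_I^+) ⊆ R^+}`, the minimal coset representatives of `W/W_I`. -/
def WsetI (I : Finset V) : Set (V ≃ₗᵢ[ℝ] V) :=
  { v | v ∈ D.Weyl ∧ ∀ α ∈ D.RposI I, v α ∈ D.Rpos }

/-- The weight lattice `P = {λ ∣ (λ, α^∨) ∈ ℤ for all α ∈ R}`. -/
def P : Set V := { lam : V | ∀ α ∈ D.R, ∃ n : ℤ, 2 * ⟪lam, α⟫ / ⟪α, α⟫ = (n : ℝ) }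

/-- The dominant weights `P^+`. -/
def Pplus : Set V := { lam ∈ D.P | ∀ α ∈ D.Rpos, 0 ≤ ⟪lam, α⟫ }

/-- `P^- = -P^+`. -/
def Pminus : Set V := { lam ∈ D.P | ∀ α ∈ D.Rpos, ⟪lam, α⟫ ≤ 0 }

/-- `P_I^+ = {λ ∈ P ∣ (λ,α) ≥ 0 for all α ∈ R_I^+}`. -/
def PplusI (I : Finset V) : Set V := { lam ∈ D.P | ∀ α ∈ D.RposI I, 0 ≤ ⟪lam, α⟫ }

/-- `P_I^- = -P_I^+`. -/
def PminusI (I : Finset V) : Set V := { lam ∈ D.P | ∀ α ∈ D.RposI I, ⟪lam, α⟫ ≤ 0 }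

/-- The Steinberg weight `λ_v = Σ_{α ∈ Π, v⁻¹α < 0} ϖ_α`. -/
def steinberg (v : V ≃ₗᵢ[ℝ] V) : V :=
  ∑ α ∈ D.Pi.filter (fun α => v⁻¹ α ∉ D.Rpos), D.fw α

/-- The length of `w` : the minimal length of a word in the simple reflections
expressing `w`. -/
def len (w : V ≃ₗᵢ[ℝ] V) : ℕ :=
  sInf { n | ∃ l : List (V ≃ₗᵢ[ℝ] V),
    (∀ g ∈ l, ∃ α ∈ D.Pi, g = rRefl α) ∧ l.prod = w ∧ l.length = n }

/-- The Bruhat order on `W` (subword property): `u ≤ w` iff some reduced word for `w`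
has a subword which is a word for `u`. -/
def bruhatLE (u w : V ≃ₗᵢ[ℝ] V) : Prop :=
  ∃ l : List (V ≃ₗᵢ[ℝ] V),
    (∀ g ∈ l, ∃ α ∈ D.Pi, g = rRefl α) ∧ l.prod = w ∧ l.length = D.len w ∧
    ∃ l' : List (V ≃ₗᵢ[ℝ] V), l'.Sublist l ∧ l'.prod = u

def Dominant (lam : V) : Prop := ∀ α ∈ D.Rpos, 0 ≤ ⟪lam, α⟫

def AntiDominant (lam : V) : Prop := ∀ α ∈ D.Rpos, ⟪lam, α⟫ ≤ 0

def DominantI (I : Finset V) (lam : V) : Prop := ∀ α ∈ D.RposI I, 0 ≤ ⟪lam, α⟫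

/-- `w = v̄(λ)`, the shortest element of `W` with `w λ₊ = λ` (where `λ₊ = w⁻¹λ` is the
dominant representative of `W·λ`). -/
def IsVbar (lam : V) (w : V ≃ₗᵢ[ℝ] V) : Prop :=
  w ∈ D.Weyl ∧ D.Dominant (w⁻¹ lam) ∧
    ∀ u ∈ D.Weyl, D.Dominant (u⁻¹ lam) → D.len w ≤ D.len u

/-- `w = v(λ)`, the shortest element of `W` with `w λ = λ₋` antidominant. -/
def IsVmin (lam : V) (w : V ≃ₗᵢ[ℝ] V) : Prop :=
  w ∈ D.Weyl ∧ D.AntiDominant (w lam) ∧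
    ∀ u ∈ D.Weyl, D.AntiDominant (u lam) → D.len w ≤ D.len u

/-- `w = v̄_I(λ)`, the shortest element of `W_I` with `w λ_{I,+} = λ`. -/
def IsVbarI (I : Finset V) (lam : V) (w : V ≃ₗᵢ[ℝ] V) : Prop :=
  w ∈ D.WeylP I ∧ D.DominantI I (w⁻¹ lam) ∧
    ∀ u ∈ D.WeylP I, D.DominantI I (u⁻¹ lam) → D.len w ≤ D.len u

/-- `λ ⪯ μ` iff `μ - λ ∈ Q^+`. -/
def preceq (lam mu : V) : Prop :=
  ∃ c : V → ℕ, mu - lam = ∑ α ∈ D.Pi, (c α : ℝ) • α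

/-- The ordering `λ ≤_∅ μ` of Heckman: `λ₊ ≺ μ₊`, or `λ₊ = μ₊` and `v̄(λ) ≤ v̄(μ)` in the
Bruhat order. -/
def leEmpty (lam mu : V) : Prop :=
  ∃ lamP muP : V, lamP ∈ D.Pplus ∧ muP ∈ D.Pplus ∧
    (∃ w ∈ D.Weyl, w lamP = lam) ∧ (∃ w ∈ D.Weyl, w muP = mu) ∧
    ((D.preceq lamP muP ∧ lamP ≠ muP) ∨
      (lamP = muP ∧ ∃ vl vm : V ≃ₗᵢ[ℝ] V,
        D.IsVbar lam vl ∧ D.IsVbar mu vm ∧ D.bruhatLE vl vm))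

def ltEmpty (lam mu : V) : Prop := D.leEmpty lam mu ∧ lam ≠ mu

/-- `≤_I`, the restriction of `≤_∅` to `P_I^+`. -/
def leI (I : Finset V) (lam mu : V) : Prop :=
  lam ∈ D.PplusI I ∧ mu ∈ D.PplusI I ∧ D.leEmpty lam mu

def ltI (I : Finset V) (lam mu : V) : Prop := D.leI I lam mu ∧ lam ≠ mu

/-- `ρ(k) = ½ Σ_{α ∈ R^+} k_α α`. -/
def rho (k : V → ℝ) : V := (1/2 : ℝ) • ∑ α ∈ D.Rpos, k α • α

end RootData

/-- The action of `w ∈ W` on `ℂ[P] ⊆ ℂ[V]`, `e^λ ↦ e^{wλ}`. -/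
def wAct (w : V ≃ₗᵢ[ℝ] V) (f : AddMonoidAlgebra ℂ V) : AddMonoidAlgebra ℂ V :=
  AddMonoidAlgebra.ofCoeff (Finsupp.mapDomain ⇑w f.coeff)

/-- `e^λ ∈ ℂ[V]`. -/
def expw (lam : V) : AddMonoidAlgebra ℂ V := AddMonoidAlgebra.ofCoeff (Finsupp.single lam 1)

namespace RootData

variable (D : RootData V)

/-- The orbit `W_I · λ`. -/
def orbitI (I : Finset V) (lam : V) : Set V := { x | ∃ w ∈ D.WeylP I, w lam = x }

/-- `m_I(λ) = Σ_{μ ∈ W_I·λ} e^μ`. -/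
def mI (I : Finset V) (lam : V) : AddMonoidAlgebra ℂ V :=
  ∑ᶠ mu ∈ D.orbitI I lam, expw mu

/-- `ℂ[P]^H`: the `H`-invariant elements of the group algebra `ℂ[P]` (realized inside
`ℂ[V]` as the elements supported on the weight lattice `P`). -/
def invSet (H : Subgroup (V ≃ₗᵢ[ℝ] V)) : Set (AddMonoidAlgebra ℂ V) :=
  { f | (∀ x ∈ f.coeff.support, x ∈ D.P) ∧ ∀ w ∈ H, wAct w f = f }

end RootData

/-- The compact torus `A = i𝔞/(2πiQ^∨)`, encoded through an abstract probability space
together with the system of characters `ev λ = e^λ : A → ℂ`, `λ ∈ P`; the characters are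
multiplicative in `λ`, unimodular, and orthonormal with respect to the (normalized Haar)
measure `μ`.  This data determines the joint distribution of the characters and hence
all the integrals below agree with those over the actual torus. -/
structure TorusData (D : RootData V) (A : Type*) [MeasurableSpace A]
    (μ : Measure A) where
  ev : V → A → ℂ
  ev_add : ∀ lam ∈ D.P, ∀ mu ∈ D.P, ∀ t, ev (lam + mu) t = ev lam t * ev mu t
  ev_norm : ∀ lam ∈ D.P, ∀ t, ‖ev lam t‖ = 1
  ev_meas : ∀ lam ∈ D.P, Measurable (ev lam)
  ev_orth : ∀ lam ∈ D.P, ∀ mu ∈ D.P,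
    (∫ t, (starRingEnd ℂ) (ev lam t) * ev mu t ∂μ) = if lam = mu then 1 else 0

namespace TorusData

variable {D : RootData V} {A : Type*} [MeasurableSpace A] {μ : Measure A}

/-- Evaluation of a Laurent polynomial `f ∈ ℂ[P]` as a function on the torus. -/
def evalF (T : TorusData D A μ) (f : AddMonoidAlgebra ℂ V) (t : A) : ℂ :=
  Finsupp.sum f.coeff fun lam c => c * T.ev lam t

/-- The weight function `δ_k = ∏_{α∈R}(e^{α/2} - e^{-α/2})^{k_α}
= ∏_{α∈R^+} |e^α - 1|^{2k_α}` on `A` (the two expressions agree since `k` is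
`W`-invariant and `|e^{α/2}-e^{-α/2}|² = |e^α - 1|²` as `|e^{α/2}| = 1`). -/
def deltaK (T : TorusData D A μ) (k : V → ℝ) (t : A) : ℝ :=
  ∏ α ∈ D.Rpos, ‖T.ev α t - 1‖ ^ (2 * k α)

/-- The inner product `(φ,ψ)_k = ∫_A conj(φ(t)) ψ(t) δ_k(t) dt` on `ℂ[P]`. -/
def ipk (T : TorusData D A μ) (k : V → ℝ) (f g : AddMonoidAlgebra ℂ V) : ℂ :=
  ∫ t, (starRingEnd ℂ) (T.evalF f t) * T.evalF g t * ((T.deltaK k t : ℝ) : ℂ) ∂μ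

/-- The defining property of the nonsymmetric Jacobi polynomial `E(λ,k)`:
`E = e^λ + Σ_{μ <_∅ λ} c_μ e^μ` and `(E, e^μ)_k = 0` for all `μ <_∅ λ`. -/
def IsNonsymJacobi (T : TorusData D A μ) (k : V → ℝ) (lam : V)
    (E : AddMonoidAlgebra ℂ V) : Prop :=
  (∃ c : V →₀ ℂ, c lam = 1 ∧
      (∀ mu ∈ c.support, mu ∈ D.P ∧ (mu = lam ∨ D.ltEmpty mu lam)) ∧
      E = Finsupp.sum c fun mu a => a • expw mu) ∧
  ∀ mu ∈ D.P, D.ltEmpty mu lam → T.ipk k E (expw mu) = 0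

/-- The defining property of the Jacobi polynomial `p_I(λ,k)`:
`p ∈ ℂ[P]^{W_I}`, `p = m_I(λ) + Σ_{μ <_I λ} c_μ m_I(μ)`, and `(p, m_I(μ))_k = 0` for
all `μ <_I λ`. -/
def IsJacobiI (T : TorusData D A μ) (I : Finset V) (k : V → ℝ) (lam : V)
    (p : AddMonoidAlgebra ℂ V) : Prop :=
  p ∈ D.invSet (D.WeylP I) ∧
  (∃ c : V →₀ ℂ, c lam = 1 ∧
      (∀ mu ∈ c.support, mu ∈ D.PplusI I ∧ (mu = lam ∨ D.ltI I mu lam)) ∧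
      p = Finsupp.sum c fun mu a => a • D.mI I mu) ∧
  ∀ mu ∈ D.PplusI I, D.ltI I mu lam → T.ipk k p (D.mI I mu) = 0

end TorusData


/-! ### Auxiliary lemmas for Statement 12 -/

section Aux12

lemma aux_rRefl_apply (α x : V) (h : α ≠ 0) :
    rRefl α x = x - (2 * ⟪x, α⟫ / ⟪α, α⟫) • α := by
  rw [rRefl, Submodule.reflection_apply, Submodule.starProjection_orthogonal_val,
    Submodule.starProjection_singleton]
  rw [real_inner_self_eq_norm_sq]
  have h2 : (‖α‖ : ℝ) ^ 2 ≠ 0 := pow_ne_zero _ (norm_ne_zero_iff.mpr h)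
  rw [real_inner_comm x α]
  field_simp
  module

lemma aux_rRefl_self (α : V) : rRefl α α = -α :=
  Submodule.reflection_orthogonalComplement_singleton_eq_neg α

lemma aux_rRefl_rRefl (α x : V) : rRefl α (rRefl α x) = x := Submodule.reflection_reflection _ x

lemma aux_mul_apply (e f : V ≃ₗᵢ[ℝ] V) (x : V) : (e * f) x = e (f x) := rfl

lemma aux_one_apply (x : V) : (1 : V ≃ₗᵢ[ℝ] V) x = x := rfl

lemma aux_rRefl_mul_self (α : V) : rRefl α * rRefl α = 1 := by
  ext x
  rw [aux_mul_apply]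
  exact aux_rRefl_rRefl α x

lemma aux_rRefl_inv (α : V) : (rRefl α)⁻¹ = rRefl α := Submodule.reflection_inv

lemma aux_rRefl_smul {c : ℝ} (hc : c ≠ 0) {α : V} (hα : α ≠ 0) :
    rRefl (c • α) = rRefl α := by
  have hcα : c • α ≠ 0 := smul_ne_zero hc hα
  have hα2 : ⟪α, α⟫ ≠ 0 := by
    rw [real_inner_self_eq_norm_sq]
    exact pow_ne_zero _ (norm_ne_zero_iff.mpr hα)
  ext x
  rw [aux_rRefl_apply _ _ hcα, aux_rRefl_apply _ _ hα]
  have h1 : ⟪x, c • α⟫ = c * ⟪x, α⟫ := real_inner_smul_right x α c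
  have h2 : ⟪c • α, c • α⟫ = c * (c * ⟪α, α⟫) := by
    rw [real_inner_smul_left, real_inner_smul_right]
  rw [h1, h2, smul_smul]
  have h3 : 2 * (c * ⟪x, α⟫) / (c * (c * ⟪α, α⟫)) * c = 2 * ⟪x, α⟫ / ⟪α, α⟫ := by
    field_simp
  rw [h3]

lemma aux_apply_inv_apply (w : V ≃ₗᵢ[ℝ] V) (x : V) : w (w⁻¹ x) = x :=
  w.apply_symm_apply x

lemma aux_inv_apply_apply (w : V ≃ₗᵢ[ℝ] V) (x : V) : w⁻¹ (w x) = x :=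
  w.symm_apply_apply x

lemma aux_inner_inv_left (w : V ≃ₗᵢ[ℝ] V) (x y : V) : ⟪w⁻¹ x, y⟫ = ⟪x, w y⟫ := by
  have h := w.inner_map_map (w⁻¹ x) y
  rw [aux_apply_inv_apply] at h
  exact h.symm

lemma aux_rRefl_conj (w : V ≃ₗᵢ[ℝ] V) {α : V} (hα : α ≠ 0) :
    w * rRefl α * w⁻¹ = rRefl (w α) := by
  have hwα : w α ≠ 0 := by
    intro h
    apply hα
    have := congrArg (⇑w⁻¹) h
    rwa [aux_inv_apply_apply, map_zero] at this
  ext x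
  rw [aux_mul_apply, aux_mul_apply, aux_rRefl_apply α _ hα, aux_rRefl_apply (w α) x hwα,
    _root_.map_sub, _root_.map_smul, aux_apply_inv_apply]
  rw [aux_inner_inv_left, w.inner_map_map α α]

namespace RootData

variable (D : RootData V)

lemma aux_inner_self_pos {α : V} (h : α ∈ D.R) : 0 < ⟪α, α⟫ := by
  have h0 : α ≠ 0 := D.nonzero α h
  rw [real_inner_self_eq_norm_sq]
  have : 0 < ‖α‖ := norm_pos_iff.mpr h0
  positivity

lemma aux_mem_R_of_Pi {α : V} (h : α ∈ D.Pi) : α ∈ D.R :=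
  D.pos_subset (D.simple_subset h)

lemma aux_mem_Rpos_of_Pi {α : V} (h : α ∈ D.Pi) : α ∈ D.Rpos := D.simple_subset h

lemma aux_neg_mem_Rpos {α : V} (hR : α ∈ D.R) (h : α ∉ D.Rpos) : -α ∈ D.Rpos := by
  by_contra hn
  exact h ((D.pos_or_neg α hR).2 hn)

lemma aux_sα_mem_R {γ α : V} (hγ : γ ∈ D.Pi) (hα : α ∈ D.R) : rRefl γ α ∈ D.R := by
  rw [aux_rRefl_apply _ _ (D.nonzero γ (D.aux_mem_R_of_Pi hγ))]
  exact D.reflect_mem γ (D.aux_mem_R_of_Pi hγ) α hα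

lemma aux_fw_inner {γ β : V} (hγ : γ ∈ D.Pi) (hβ : β ∈ D.Pi) :
    ⟪D.fw γ, β⟫ = if γ = β then ⟪β, β⟫ / 2 else 0 := by
  have h := D.fw_prop γ hγ β hβ
  rw [real_inner_smul_right] at h
  have hb : (0:ℝ) < ⟪β, β⟫ := D.aux_inner_self_pos (D.aux_mem_R_of_Pi hβ)
  split_ifs with he
  · rw [if_pos he] at h
    have hb' : ⟪β, β⟫ ≠ 0 := ne_of_gt hb
    field_simp at h
    linarith
  · rw [if_neg he] at h
    rcases mul_eq_zero.mp h with h1 | h1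
    · exact absurd h1 (div_ne_zero two_ne_zero (ne_of_gt hb))
    · exact h1

lemma aux_fw_inner_sum {γ₀ : V} (hγ₀ : γ₀ ∈ D.Pi) (c : V → ℝ) :
    ⟪D.fw γ₀, ∑ γ ∈ D.Pi, c γ • γ⟫ = c γ₀ * (⟪γ₀, γ₀⟫ / 2) := by
  rw [inner_sum, Finset.sum_eq_single γ₀]
  · rw [real_inner_smul_right, D.aux_fw_inner hγ₀ hγ₀, if_pos rfl]
  · intro β hβ hne
    rw [real_inner_smul_right, D.aux_fw_inner hγ₀ hβ, if_neg (fun h => hne h.symm), mul_zero]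
  · intro h
    exact absurd hγ₀ h

/-- Membership in the nonnegative cone spanned by the simple roots. -/
def InCone (x : V) : Prop :=
  ∃ c : V → ℝ, (∀ γ, 0 ≤ c γ) ∧ x = ∑ γ ∈ D.Pi, c γ • γ

lemma aux_inCone_of_Rpos {α : V} (h : α ∈ D.Rpos) : D.InCone α := by
  obtain ⟨c, h1, h2⟩ := D.pos_comb α h
  exact ⟨c, h1, h2⟩

lemma aux_inCone_zero : D.InCone 0 :=
  ⟨fun _ => 0, fun _ => le_refl 0, by simp⟩

lemma aux_inCone_add {x y : V} (hx : D.InCone x) (hy : D.InCone y) : D.InCone (x + y) := by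
  obtain ⟨c, hc0, hcx⟩ := hx
  obtain ⟨d, hd0, hdy⟩ := hy
  refine ⟨fun γ => c γ + d γ, fun γ => add_nonneg (hc0 γ) (hd0 γ), ?_⟩
  rw [hcx, hdy, ← Finset.sum_add_distrib]
  exact Finset.sum_congr rfl fun γ _ => (add_smul _ _ _).symm

lemma aux_inCone_smul {t : ℝ} (ht : 0 ≤ t) {x : V} (hx : D.InCone x) : D.InCone (t • x) := by
  obtain ⟨c, hc0, hcx⟩ := hx
  refine ⟨fun γ => t * c γ, fun γ => mul_nonneg ht (hc0 γ), ?_⟩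
  rw [hcx, Finset.smul_sum]
  exact Finset.sum_congr rfl fun γ _ => (smul_smul _ _ _)

lemma aux_inCone_sum (s : Finset V) (c : V → ℝ) (f : V → V) :
    (∀ δ ∈ s, 0 ≤ c δ) → (∀ δ ∈ s, D.InCone (f δ)) →
    D.InCone (∑ δ ∈ s, c δ • f δ) := by
  classical
  induction s using Finset.induction_on with
  | empty => intro _ _; simpa using D.aux_inCone_zero
  | @insert a s ha ih =>
    intro hc hf
    rw [Finset.sum_insert ha]
    exact D.aux_inCone_add
      (D.aux_inCone_smul (hc a (Finset.mem_insert_self a s)) (hf a (Finset.mem_insert_self a s)))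
      (ih (fun δ hδ => hc δ (Finset.mem_insert_of_mem hδ))
          (fun δ hδ => hf δ (Finset.mem_insert_of_mem hδ)))

lemma aux_eq_zero_of_inCone_neg {x : V} (hx : D.InCone x) (hnx : D.InCone (-x)) : x = 0 := by
  obtain ⟨c, hc0, hcx⟩ := hx
  obtain ⟨d, hd0, hdx⟩ := hnx
  have hz : ∀ γ₀ ∈ D.Pi, c γ₀ = 0 := by
    intro γ₀ hγ₀
    have h1 : ⟪D.fw γ₀, x⟫ = c γ₀ * (⟪γ₀, γ₀⟫ / 2) := by
      rw [hcx]; exact D.aux_fw_inner_sum hγ₀ c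
    have h2 : ⟪D.fw γ₀, -x⟫ = d γ₀ * (⟪γ₀, γ₀⟫ / 2) := by
      rw [hdx]; exact D.aux_fw_inner_sum hγ₀ d
    have h3 : ⟪D.fw γ₀, -x⟫ = -⟪D.fw γ₀, x⟫ := inner_neg_right _ _
    have hp : (0:ℝ) < ⟪γ₀, γ₀⟫ := D.aux_inner_self_pos (D.aux_mem_R_of_Pi hγ₀)
    nlinarith [hc0 γ₀, hd0 γ₀]
  rw [hcx]
  exact Finset.sum_eq_zero fun γ hγ => by rw [hz γ hγ, zero_smul]

lemma aux_mem_Rpos_of_inCone {x : V} (hR : x ∈ D.R) (hc : D.InCone x) : x ∈ D.Rpos := by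
  by_contra h
  have h1 := D.aux_inCone_of_Rpos (D.aux_neg_mem_Rpos hR h)
  have h2 := D.aux_eq_zero_of_inCone_neg hc h1
  exact D.nonzero x hR h2

lemma aux_smul_coeff_nonneg {γ β : V} (hγ : γ ∈ D.Pi) (hβ : β ∈ D.Rpos) {c : ℝ}
    (h : β = c • γ) : 0 ≤ c := by
  obtain ⟨e, he0, hes⟩ := D.pos_comb β hβ
  have h1 : ⟪D.fw γ, β⟫ = e γ * (⟪γ, γ⟫ / 2) := by
    rw [hes]; exact D.aux_fw_inner_sum hγ e
  have h2 : ⟪D.fw γ, β⟫ = c * (⟪γ, γ⟫ / 2) := by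
    rw [h, real_inner_smul_right, D.aux_fw_inner hγ hγ, if_pos rfl]
  have hp : (0:ℝ) < ⟪γ, γ⟫ := D.aux_inner_self_pos (D.aux_mem_R_of_Pi hγ)
  nlinarith [he0 γ]

/-- The simple reflection `s_γ` maps positive roots not proportional to `γ` to
positive roots. -/
lemma aux_sα_pos {γ β : V} (hγ : γ ∈ D.Pi) (hβ : β ∈ D.Rpos)
    (hne : ∀ c : ℝ, β ≠ c • γ) : rRefl γ β ∈ D.Rpos := by
  have hβR : β ∈ D.R := D.pos_subset hβ
  have hγR : γ ∈ D.R := D.aux_mem_R_of_Pi hγ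
  have hγ0 : γ ≠ 0 := D.nonzero γ hγR
  have hx : rRefl γ β ∈ D.R := D.aux_sα_mem_R hγ hβR
  by_contra h
  have hneg : -(rRefl γ β) ∈ D.Rpos := D.aux_neg_mem_Rpos hx h
  obtain ⟨c, hc0, hcs⟩ := D.pos_comb β hβ
  obtain ⟨d, hd0, hds⟩ := D.pos_comb _ hneg
  set m : ℝ := 2 * ⟪β, γ⟫ / ⟪γ, γ⟫ with hm
  have key : (∑ γ' ∈ D.Pi, c γ' • γ') + (∑ γ' ∈ D.Pi, d γ' • γ') = m • γ := by
    rw [← hcs, ← hds, aux_rRefl_apply γ β hγ0, ← hm]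
    abel
  have hvanish : ∀ δ ∈ D.Pi, δ ≠ γ → c δ = 0 := by
    intro δ hδ hne'
    have h1 := congrArg (fun y => ⟪D.fw δ, y⟫) key
    rw [inner_add_right, D.aux_fw_inner_sum hδ c, D.aux_fw_inner_sum hδ d,
      real_inner_smul_right, D.aux_fw_inner hδ hγ, if_neg hne', mul_zero] at h1
    have hp : (0:ℝ) < ⟪δ, δ⟫ := D.aux_inner_self_pos (D.aux_mem_R_of_Pi hδ)
    nlinarith [hc0 δ, hd0 δ]
  have hβγ : β = c γ • γ := by
    rw [hcs, Finset.sum_eq_single γ]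
    · intro δ hδ hne'
      rw [hvanish δ hδ hne', zero_smul]
    · intro h'
      exact absurd hγ h'
  exact hne (c γ) hβγ

lemma aux_rRefl_mem_weyl {γ : V} (hγ : γ ∈ D.Pi) : rRefl γ ∈ D.Weyl :=
  Subgroup.subset_closure ⟨γ, hγ, rfl⟩

lemma aux_weyl_maps_R {w : V ≃ₗᵢ[ℝ] V} (hw : w ∈ D.Weyl) {α : V} (hα : α ∈ D.R) :
    w α ∈ D.R := by
  have key : ∀ β ∈ D.R, w β ∈ D.R ∧ w⁻¹ β ∈ D.R := by
    refine Subgroup.closure_induction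
      (p := fun g _ => ∀ β ∈ D.R, g β ∈ D.R ∧ g⁻¹ β ∈ D.R) ?_ ?_ ?_ ?_ hw
    · rintro x ⟨γ, hγ, rfl⟩ β hβ
      refine ⟨D.aux_sα_mem_R hγ hβ, ?_⟩
      rw [aux_rRefl_inv]
      exact D.aux_sα_mem_R hγ hβ
    · intro β hβ
      rw [inv_one]
      rw [aux_one_apply]
      exact ⟨hβ, hβ⟩
    · intro x y hx hy hpx hpy β hβ
      constructor
      · rw [aux_mul_apply]
        exact (hpx _ (hpy β hβ).1).1
      · rw [mul_inv_rev, aux_mul_apply]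
        exact (hpy _ (hpx β hβ).2).2
    · intro x hx hp β hβ
      refine ⟨(hp β hβ).2, ?_⟩
      rw [inv_inv]
      exact (hp β hβ).1
  exact (key α hα).1

/-- A word in the simple reflections. -/
def IsWord (D : RootData V) (l : List (V ≃ₗᵢ[ℝ] V)) : Prop :=
  ∀ g ∈ l, ∃ α ∈ D.Pi, g = rRefl α

lemma aux_word_mem_weyl {l : List (V ≃ₗᵢ[ℝ] V)} (hl : D.IsWord l) : l.prod ∈ D.Weyl := by
  induction l with
  | nil => exact one_mem _
  | cons s t ih =>
    rw [List.prod_cons]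
    obtain ⟨γ, hγ, rfl⟩ := hl s List.mem_cons_self
    exact mul_mem (D.aux_rRefl_mem_weyl hγ) (ih fun g hg => hl g (List.mem_cons_of_mem _ hg))

lemma aux_exists_word {w : V ≃ₗᵢ[ℝ] V} (hw : w ∈ D.Weyl) :
    ∃ l, D.IsWord l ∧ l.prod = w := by
  refine Subgroup.closure_induction
    (p := fun g _ => ∃ l, D.IsWord l ∧ l.prod = g) ?_ ?_ ?_ ?_ hw
  · rintro x ⟨γ, hγ, rfl⟩
    refine ⟨[rRefl γ], ?_, by simp⟩
    intro g hg
    rw [List.mem_singleton] at hg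
    exact ⟨γ, hγ, hg⟩
  · exact ⟨[], fun g hg => absurd hg List.not_mem_nil, List.prod_nil⟩
  · rintro x y _ _ ⟨l1, h1, rfl⟩ ⟨l2, h2, rfl⟩
    refine ⟨l1 ++ l2, ?_, List.prod_append⟩
    intro g hg
    rcases List.mem_append.mp hg with h | h
    · exact h1 g h
    · exact h2 g h
  · rintro x _ ⟨l, hl, rfl⟩
    refine ⟨(l.map fun g => g⁻¹).reverse, ?_, (List.prod_inv_reverse l).symm⟩
    intro g hg
    rw [List.mem_reverse, List.mem_map] at hg
    obtain ⟨g', hg', rfl⟩ := hg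
    obtain ⟨γ, hγ, rfl⟩ := hl g' hg'
    exact ⟨γ, hγ, aux_rRefl_inv γ⟩

lemma aux_len_le_word {l : List (V ≃ₗᵢ[ℝ] V)} (hl : D.IsWord l) :
    D.len l.prod ≤ l.length :=
  Nat.sInf_le ⟨l, hl, rfl, rfl⟩

lemma aux_exists_reduced {w : V ≃ₗᵢ[ℝ] V} (hw : w ∈ D.Weyl) :
    ∃ l, D.IsWord l ∧ l.prod = w ∧ l.length = D.len w := by
  obtain ⟨l, hl, hp⟩ := D.aux_exists_word hw
  have hne : {n | ∃ l : List (V ≃ₗᵢ[ℝ] V),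
      (∀ g ∈ l, ∃ α ∈ D.Pi, g = rRefl α) ∧ l.prod = w ∧ l.length = n}.Nonempty :=
    ⟨l.length, l, hl, hp, rfl⟩
  obtain ⟨l', h1, h2, h3⟩ := Nat.sInf_mem hne
  exact ⟨l', h1, h2, h3⟩

/-- The deletion/exchange property. -/
lemma aux_exchange : ∀ l : List (V ≃ₗᵢ[ℝ] V), D.IsWord l → ∀ α ∈ D.Rpos,
    l.prod α ∉ D.Rpos →
    ∃ l', D.IsWord l' ∧ l'.prod = l.prod * rRefl α ∧ l'.length + 1 = l.length := by
  intro l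
  induction l with
  | nil =>
    intro _ α hα h
    rw [List.prod_nil, aux_one_apply] at h
    exact absurd hα h
  | cons s t ih =>
    intro hl α hα h
    obtain ⟨γ, hγ, hs⟩ := hl s List.mem_cons_self
    have hlt : D.IsWord t := fun g hg => hl g (List.mem_cons_of_mem _ hg)
    rw [List.prod_cons] at h
    have hα0 : α ≠ 0 := D.nonzero α (D.pos_subset hα)
    by_cases hβ : t.prod α ∈ D.Rpos
    · have hsβ : rRefl γ (t.prod α) ∉ D.Rpos := by
        rw [aux_mul_apply, hs] at h
        exact h
      have hex : ∃ c : ℝ, t.prod α = c • γ := by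
        by_contra hc
        push_neg at hc
        exact hsβ (D.aux_sα_pos hγ hβ hc)
      obtain ⟨c, hcβ⟩ := hex
      have hc0 : c ≠ 0 := by
        rintro rfl
        exact D.nonzero _ (D.pos_subset hβ) (by simpa using hcβ)
      have e1 : rRefl (t.prod α) = rRefl γ := by rw [hcβ]; exact aux_rRefl_smul hc0 (D.nonzero γ (D.aux_mem_R_of_Pi hγ))
      have e2 : t.prod * rRefl α * (t.prod)⁻¹ = rRefl γ := by
        rw [aux_rRefl_conj _ hα0, e1]
      have e3 : t.prod * rRefl α = rRefl γ * t.prod := by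
        have := congrArg (fun g => g * t.prod) e2
        simpa [mul_assoc] using this
      have e4 : (s :: t).prod * rRefl α = t.prod := by
        rw [List.prod_cons, hs, mul_assoc, e3, ← mul_assoc, aux_rRefl_mul_self, one_mul]
      exact ⟨t, hlt, e4.symm, by simp⟩
    · obtain ⟨t', h1, h2, h3⟩ := ih hlt α hα hβ
      refine ⟨s :: t', ?_, ?_, ?_⟩
      · intro g hg
        rcases List.mem_cons.mp hg with h' | h'
        · exact ⟨γ, hγ, h'.trans hs⟩
        · exact h1 g h'
      · rw [List.prod_cons, List.prod_cons, h2, mul_assoc]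
      · simp only [List.length_cons]
        omega

lemma aux_len_mul_rRefl_lt {w : V ≃ₗᵢ[ℝ] V} {α : V} (hw : w ∈ D.Weyl)
    (hα : α ∈ D.Rpos) (h : w α ∉ D.Rpos) : D.len (w * rRefl α) < D.len w := by
  obtain ⟨l, hl, hp, hlen⟩ := D.aux_exists_reduced hw
  obtain ⟨l', h1, h2, h3⟩ := D.aux_exchange l hl α hα (by rwa [hp])
  have h4 := D.aux_len_le_word h1
  rw [h2, hp] at h4
  omega

/-- For `ρ` dominant and `x` antidominant, `⟪ρ, x⟫` is the minimum of `⟪ρ, ·⟫` over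
the Weyl group orbit of `x`. -/
lemma aux_inner_le_orbit {ρ x : V} (hρ : ∀ β ∈ D.Rpos, 0 ≤ ⟪ρ, β⟫)
    (hx : D.AntiDominant x) : ∀ w ∈ D.Weyl, ⟪ρ, x⟫ ≤ ⟪ρ, w x⟫ := by
  suffices H : ∀ n : ℕ, ∀ w ∈ D.Weyl, D.len w = n → ⟪ρ, x⟫ ≤ ⟪ρ, w x⟫ by
    intro w hw
    exact H (D.len w) w hw rfl
  intro n
  induction n using Nat.strong_induction_on with
  | _ n ih =>
    intro w hw hn
    obtain ⟨l, hl, hp, hlen⟩ := D.aux_exists_reduced hw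
    by_cases hnil : l = []
    · have : w = 1 := by rw [← hp, hnil, List.prod_nil]
      rw [this, aux_one_apply]
    · set s := l.getLast hnil with hsdef
      obtain ⟨γ, hγ, hs⟩ := hl s (List.getLast_mem hnil)
      have hγR : γ ∈ D.R := D.aux_mem_R_of_Pi hγ
      have hγ0 : γ ≠ 0 := D.nonzero γ hγR
      have hγp : (0:ℝ) < ⟪γ, γ⟫ := D.aux_inner_self_pos hγR
      have hdw : D.IsWord l.dropLast := fun g hg =>
        hl g (List.dropLast_sublist l |>.subset hg)
      set u := l.dropLast.prod with hu
      have hwu : w = u * s := by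
        conv_lhs => rw [← hp, ← List.dropLast_append_getLast hnil]
        rw [List.prod_append, List.prod_cons, List.prod_nil, mul_one, ← hsdef, ← hu]
      have huW : u ∈ D.Weyl := D.aux_word_mem_weyl hdw
      have hul : D.len u ≤ l.length - 1 := by
        have := D.aux_len_le_word hdw
        rwa [List.length_dropLast] at this
      have hlpos : 0 < l.length := List.length_pos_iff.mpr hnil
      have hupos : u γ ∈ D.Rpos := by
        by_contra hcon
        obtain ⟨l'', h1, h2, h3⟩ :=
          D.aux_exchange l.dropLast hdw γ (D.aux_mem_Rpos_of_Pi hγ) (by rwa [← hu])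
        have h4 := D.aux_len_le_word h1
        rw [h2, ← hu, ← hs, ← hwu] at h4
        rw [List.length_dropLast] at h3
        omega
      set c : ℝ := 2 * ⟪x, γ⟫ / ⟪γ, γ⟫ with hc
      have hcnp : c ≤ 0 := by
        have h1 : ⟪x, γ⟫ ≤ 0 := hx γ (D.aux_mem_Rpos_of_Pi hγ)
        apply div_nonpos_of_nonpos_of_nonneg <;> linarith
      have hwx : w x = u x - c • u γ := by
        rw [hwu, aux_mul_apply, hs, aux_rRefl_apply γ x hγ0, _root_.map_sub, _root_.map_smul, ← hc]
      have h1 : ⟪ρ, w x⟫ = ⟪ρ, u x⟫ - c * ⟪ρ, u γ⟫ := by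
        rw [hwx, inner_sub_right, real_inner_smul_right]
      have h2 : 0 ≤ ⟪ρ, u γ⟫ := hρ _ hupos
      have h3 : ⟪ρ, x⟫ ≤ ⟪ρ, u x⟫ := by
        refine ih (D.len u) ?_ u huW rfl
        omega
      nlinarith

/-- `⟪ρ(k), γ⟫ ≥ 0` for simple `γ`. -/
lemma aux_rho_inner_simple {k : V → ℝ} (hk0 : ∀ α ∈ D.R, 0 ≤ k α)
    (hkW : ∀ w ∈ D.Weyl, ∀ α ∈ D.R, k (w α) = k α) {γ : V} (hγ : γ ∈ D.Pi) :
    0 ≤ ⟪D.rho k, γ⟫ := by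
  have hγR : γ ∈ D.R := D.aux_mem_R_of_Pi hγ
  have hγ0 : γ ≠ 0 := D.nonzero γ hγR
  have hγp : (0:ℝ) < ⟪γ, γ⟫ := D.aux_inner_self_pos hγR
  have hsW : rRefl γ ∈ D.Weyl := D.aux_rRefl_mem_weyl hγ
  have hmap : rRefl γ (D.rho k) = (1/2 : ℝ) • ∑ β ∈ D.Rpos, k β • rRefl γ β := by
    rw [RootData.rho, _root_.map_smul, _root_.map_sum]
    congr 1
    exact Finset.sum_congr rfl fun β _ => by rw [_root_.map_smul]
  have hTc : ∑ β ∈ D.Rpos.filter (fun β => ¬∃ c : ℝ, β = c • γ), k β • rRefl γ β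
      = ∑ β ∈ D.Rpos.filter (fun β => ¬∃ c : ℝ, β = c • γ), k β • β := by
    refine Finset.sum_nbij' (fun β => rRefl γ β) (fun β => rRefl γ β) ?_ ?_ ?_ ?_ ?_
    · intro β hβ
      rw [Finset.mem_filter] at hβ ⊢
      obtain ⟨hβ1, hβ2⟩ := hβ
      push_neg at hβ2
      refine ⟨D.aux_sα_pos hγ hβ1 hβ2, ?_⟩
      rintro ⟨c, hc⟩
      have := congrArg (fun y => rRefl γ y) hc
      simp only [aux_rRefl_rRefl] at this
      rw [_root_.map_smul, aux_rRefl_self] at this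
      exact hβ2 (-c) (by rw [this, smul_neg, neg_smul])
    · intro β hβ
      rw [Finset.mem_filter] at hβ ⊢
      obtain ⟨hβ1, hβ2⟩ := hβ
      push_neg at hβ2
      refine ⟨D.aux_sα_pos hγ hβ1 hβ2, ?_⟩
      rintro ⟨c, hc⟩
      have := congrArg (fun y => rRefl γ y) hc
      simp only [aux_rRefl_rRefl] at this
      rw [_root_.map_smul, aux_rRefl_self] at this
      exact hβ2 (-c) (by rw [this, smul_neg, neg_smul])
    · intro β _
      exact aux_rRefl_rRefl γ β
    · intro β _
      exact aux_rRefl_rRefl γ β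
    · intro β hβ
      rw [Finset.mem_filter] at hβ
      have hk : k (rRefl γ β) = k β := hkW _ hsW β (D.pos_subset hβ.1)
      show k β • (rRefl γ) β = k ((rRefl γ) β) • (rRefl γ) β
      rw [hk]
  have hT : ∑ β ∈ D.Rpos.filter (fun β => ∃ c : ℝ, β = c • γ), k β • rRefl γ β
      = -∑ β ∈ D.Rpos.filter (fun β => ∃ c : ℝ, β = c • γ), k β • β := by
    rw [← Finset.sum_neg_distrib]
    refine Finset.sum_congr rfl ?_
    intro β hβ
    rw [Finset.mem_filter] at hβ
    obtain ⟨c, rfl⟩ := hβ.2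
    rw [_root_.map_smul, aux_rRefl_self, smul_neg, smul_neg]
  have hρs : D.rho k - rRefl γ (D.rho k)
      = ∑ β ∈ D.Rpos.filter (fun β => ∃ c : ℝ, β = c • γ), k β • β := by
    rw [hmap, RootData.rho]
    rw [← Finset.sum_filter_add_sum_filter_not D.Rpos (fun β => ∃ c : ℝ, β = c • γ)
      (fun β => k β • β)]
    rw [← Finset.sum_filter_add_sum_filter_not D.Rpos (fun β => ∃ c : ℝ, β = c • γ)
      (fun β => k β • rRefl γ β)]
    rw [hTc, hT]
    generalize (∑ β ∈ D.Rpos.filter (fun β => ∃ c : ℝ, β = c • γ), k β • β) = A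
    generalize (∑ β ∈ D.Rpos.filter (fun β => ¬∃ c : ℝ, β = c • γ), k β • β) = B
    match_scalars <;> ring
  have h2 : 2 * ⟪D.rho k, γ⟫ = ⟪D.rho k - rRefl γ (D.rho k), γ⟫ := by
    rw [inner_sub_left]
    have h := (rRefl γ).inner_map_map (D.rho k) γ
    rw [aux_rRefl_self, inner_neg_right] at h
    linarith
  have h3 : ⟪(∑ β ∈ D.Rpos.filter (fun β => ∃ c : ℝ, β = c • γ), k β • β), γ⟫
      = ∑ β ∈ D.Rpos.filter (fun β => ∃ c : ℝ, β = c • γ), k β * ⟪β, γ⟫ := by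
    rw [sum_inner]
    exact Finset.sum_congr rfl fun β _ => real_inner_smul_left _ _ _
  have h4 : 0 ≤ ∑ β ∈ D.Rpos.filter (fun β => ∃ c : ℝ, β = c • γ), k β * ⟪β, γ⟫ := by
    refine Finset.sum_nonneg ?_
    intro β hβ
    rw [Finset.mem_filter] at hβ
    obtain ⟨hβ1, c, hc⟩ := hβ
    have hc0 : 0 ≤ c := D.aux_smul_coeff_nonneg hγ hβ1 hc
    have : ⟪β, γ⟫ = c * ⟪γ, γ⟫ := by rw [hc, real_inner_smul_left]
    have hkβ : 0 ≤ k β := hk0 β (D.pos_subset hβ1)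
    rw [this]
    exact mul_nonneg hkβ (mul_nonneg hc0 (le_of_lt hγp))
  rw [hρs, h3] at h2
  linarith

lemma aux_rho_dominant {k : V → ℝ} (hk0 : ∀ α ∈ D.R, 0 ≤ k α)
    (hkW : ∀ w ∈ D.Weyl, ∀ α ∈ D.R, k (w α) = k α) :
    ∀ β ∈ D.Rpos, 0 ≤ ⟪D.rho k, β⟫ := by
  intro β hβ
  obtain ⟨c, hc0, hcs⟩ := D.pos_comb β hβ
  rw [hcs, inner_sum]
  refine Finset.sum_nonneg ?_
  intro γ hγ
  rw [real_inner_smul_right]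
  exact mul_nonneg (hc0 γ) (D.aux_rho_inner_simple hk0 hkW hγ)

lemma aux_inner_fw_span {δ : V} (hδ : δ ∈ D.Pi) {I : Finset V} (hI : I ⊆ D.Pi)
    (hδI : δ ∉ I) {x : V} (hx : x ∈ Submodule.span ℝ (I : Set V)) :
    ⟪D.fw δ, x⟫ = 0 := by
  induction hx using Submodule.span_induction with
  | mem y hy =>
    have hyI : y ∈ I := hy
    rw [D.aux_fw_inner hδ (hI hyI), if_neg (fun h => hδI (by rw [h]; exact hyI))]
  | zero => exact inner_zero_right _
  | add y z _ _ hy hz => rw [inner_add_right, hy, hz, add_zero]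
  | smul t y _ hy => rw [real_inner_smul_right, hy, mul_zero]

end RootData

end Aux12

/-- For every `λ ∈ P_I^−` one has `v(λ) ∈ W^I`, and
`λ̃ = λ − v(λ)⁻¹ρ(k)` satisfies `(λ̃, α) ≤ 0` for all `α ∈ R_I^+`; moreover the map
`P_I^− → 𝔞*`, `λ ↦ λ̃`, is injective. -/
theorem statement_12 (D : RootData V) (I : Finset V) (hI : I ⊆ D.Pi)
    (k : V → ℝ) (hk0 : ∀ α ∈ D.R, 0 ≤ k α)
    (hkW : ∀ w ∈ D.Weyl, ∀ α ∈ D.R, k (w α) = k α) :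
    (∀ lam ∈ D.PminusI I, ∀ w : V ≃ₗᵢ[ℝ] V, D.IsVmin lam w →
      w ∈ D.WsetI I ∧ ∀ α ∈ D.RposI I, ⟪lam - w⁻¹ (D.rho k), α⟫ ≤ 0) ∧
    ∀ lam ∈ D.PminusI I, ∀ lam' ∈ D.PminusI I, ∀ w w' : V ≃ₗᵢ[ℝ] V,
      D.IsVmin lam w → D.IsVmin lam' w' →
      lam - w⁻¹ (D.rho k) = lam' - w'⁻¹ (D.rho k) → lam = lam' := by
  constructor
  · rintro lam ⟨hlamP, hlamI⟩ w ⟨hwW, hwa, hwmin⟩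
    have stepA : ∀ α ∈ I, w α ∈ D.Rpos := by
      intro α hαI
      have hαPi : α ∈ D.Pi := hI hαI
      have hαpos : α ∈ D.Rpos := D.aux_mem_Rpos_of_Pi hαPi
      have hαR : α ∈ D.R := D.pos_subset hαpos
      have hα0 : α ≠ 0 := D.nonzero α hαR
      have hαRI : α ∈ D.RposI I :=
        ⟨hαpos, Submodule.subset_span (by exact_mod_cast hαI)⟩
      have hlα : ⟪lam, α⟫ ≤ 0 := hlamI α hαRI
      by_contra hcon
      have hwαR : w α ∈ D.R := D.aux_weyl_maps_R hwW hαR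
      have hneg : -(w α) ∈ D.Rpos := D.aux_neg_mem_Rpos hwαR hcon
      rcases hlα.lt_or_eq with hlt | heq
      · have h1 : ⟪w lam, -(w α)⟫ ≤ 0 := hwa _ hneg
        have h2 : ⟪w lam, w α⟫ = ⟪lam, α⟫ := w.inner_map_map lam α
        rw [inner_neg_right] at h1
        linarith
      · have hsα : rRefl α lam = lam := by
          rw [aux_rRefl_apply _ _ hα0, heq]
          simp
        have hu : (w * rRefl α) lam = w lam := by rw [aux_mul_apply, hsα]
        have huW : w * rRefl α ∈ D.Weyl := mul_mem hwW (D.aux_rRefl_mem_weyl hαPi)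
        have hanti : D.AntiDominant ((w * rRefl α) lam) := by
          rw [hu]; exact hwa
        have hle := hwmin _ huW hanti
        have hlt2 := D.aux_len_mul_rRefl_lt hwW hαpos hcon
        omega
    have stepB : ∀ α ∈ D.RposI I, w α ∈ D.Rpos := by
      rintro α ⟨hαpos, hαspan⟩
      obtain ⟨c, hc0, hcs⟩ := D.pos_comb α hαpos
      have hczero : ∀ δ ∈ D.Pi, δ ∉ I → c δ = 0 := by
        intro δ hδ hδI
        have h1 : ⟪D.fw δ, α⟫ = 0 := D.aux_inner_fw_span hδ hI hδI hαspan
        have h2 : ⟪D.fw δ, α⟫ = c δ * (⟪δ, δ⟫ / 2) := by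
          rw [hcs]
          exact D.aux_fw_inner_sum hδ c
        have hp : (0:ℝ) < ⟪δ, δ⟫ := D.aux_inner_self_pos (D.aux_mem_R_of_Pi hδ)
        nlinarith [hc0 δ]
      have hαI2 : α = ∑ δ ∈ I, c δ • δ := by
        rw [hcs]
        exact (Finset.sum_subset hI fun δ hδ hδI => by
          rw [hczero δ hδ hδI, zero_smul]).symm
      have hwα : w α = ∑ δ ∈ I, c δ • w δ := by
        rw [hαI2, _root_.map_sum]
        exact Finset.sum_congr rfl fun δ _ => by rw [_root_.map_smul]
      have hcone : D.InCone (w α) := by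
        rw [hwα]
        exact D.aux_inCone_sum I c _ (fun δ _ => hc0 δ)
          (fun δ hδ => D.aux_inCone_of_Rpos (stepA δ hδ))
      exact D.aux_mem_Rpos_of_inCone (D.aux_weyl_maps_R hwW (D.pos_subset hαpos)) hcone
    refine ⟨⟨hwW, stepB⟩, ?_⟩
    intro α hα
    rw [inner_sub_left, aux_inner_inv_left]
    have h2 := D.aux_rho_dominant hk0 hkW _ (stepB α hα)
    have h3 := hlamI α hα
    linarith
  · rintro lam ⟨hlP, hlI⟩ lam' ⟨hlP', hlI'⟩ w w' ⟨hwW, hwa, _⟩ ⟨hwW', hwa', _⟩ heq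
    have hdom := D.aux_rho_dominant hk0 hkW
    have key1 : ⟪D.rho k, w lam⟫ ≤ ⟪D.rho k, w' lam⟫ := by
      have h := D.aux_inner_le_orbit hdom hwa (w' * w⁻¹) (mul_mem hwW' (inv_mem hwW))
      have h' : (w' * w⁻¹) (w lam) = w' lam := by
        rw [aux_mul_apply, aux_inv_apply_apply]
      rwa [h'] at h
    have key2 : ⟪D.rho k, w' lam'⟫ ≤ ⟪D.rho k, w lam'⟫ := by
      have h := D.aux_inner_le_orbit hdom hwa' (w * w'⁻¹) (mul_mem hwW (inv_mem hwW'))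
      have h' : (w * w'⁻¹) (w' lam') = w lam' := by
        rw [aux_mul_apply, aux_inv_apply_apply]
      rwa [h'] at h
    have hdiff : lam - lam' = w⁻¹ (D.rho k) - w'⁻¹ (D.rho k) := by
      have h1 : lam - lam' = (lam - w⁻¹ (D.rho k)) - (lam' - w'⁻¹ (D.rho k))
          + (w⁻¹ (D.rho k) - w'⁻¹ (D.rho k)) := by abel
      rw [h1, heq]
      abel
    have hn : ⟪lam - lam', lam - lam'⟫ ≤ 0 := by
      nth_rewrite 1 [hdiff]
      rw [inner_sub_left, inner_sub_right, inner_sub_right]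
      rw [aux_inner_inv_left, aux_inner_inv_left, aux_inner_inv_left, aux_inner_inv_left]
      linarith
    have hzero : lam - lam' = 0 := by
      have h0 : (0:ℝ) ≤ ⟪lam - lam', lam - lam'⟫ := real_inner_self_nonneg
      have h1 : ⟪lam - lam', lam - lam'⟫ = (0:ℝ) := le_antisymm hn h0
      exact inner_self_eq_zero.mp h1
    have := sub_eq_zero.mp hzero
    exact this

end
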